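/- Let H(z,w) = (z², √2·zw, w²) and let a ∈ ℂ. Then the vector field V(z,w) = (a·w, −conj(a)·z³/√2, −conj(a)·z²·w) along H satisfies Re⟨V(z,w), H(z,w)⟩ = 0 for all (z,w) with |z|²+|w|² = 1, i.e., V is an infinitesimal deformation of the sphere map H : S³ → S⁵. -/

import Mathlib

open ComplexConjugate

/-- For `H(z,w) = (z², √2·zw, w²)` and `a ∈ ℂ`, the vector field
`V(z,w) = (a·w, −conj(a)·z³/√2, −conj(a)·z²·w)` along `H` satisfies
`Re⟨V, H⟩ = 0` on the sphere `|z|² + |w|² = 1`, i.e. `V` is an infinitesimal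
deformation of the sphere map `H : S³ → S⁵`. -/
theorem stmt_9 :
    ∀ (a : ℂ) (z w : ℂ), ‖z‖ ^ 2 + ‖w‖ ^ 2 = 1 →
      ((a * w) * conj (z ^ 2)
        + (-(conj a) * z ^ 3 / (Real.sqrt 2 : ℂ)) * conj ((Real.sqrt 2 : ℂ) * z * w)
        + (-(conj a) * z ^ 2 * w) * conj (w ^ 2)).re = 0 := by
  intro a z w h
  have hzw : z * conj z + w * conj w = 1 := by
    rw [Complex.mul_conj, Complex.mul_conj]
    norm_cast
    simpa [Complex.sq_norm] using h
  have s2 : (Real.sqrt 2 : ℂ) ≠ 0 := by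
    norm_cast
    positivity
  have key : (a * w) * conj (z ^ 2)
        + (-(conj a) * z ^ 3 / (Real.sqrt 2 : ℂ)) * conj ((Real.sqrt 2 : ℂ) * z * w)
        + (-(conj a) * z ^ 2 * w) * conj (w ^ 2)
      = a * w * (conj z) ^ 2 - conj (a * w * (conj z) ^ 2) := by
    simp only [map_mul, map_pow, Complex.conj_conj, Complex.conj_ofReal]
    field_simp
    linear_combination (-(conj a) * z ^ 2 * conj w) * hzw
  rw [key]
  rw [Complex.sub_re, Complex.conj_re, sub_self]
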